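/- Let S be the free semigroup on the countably many generators (s_n)_{n∈ℕ}. Then every very strongly productive ultrafilter on S is multiplicatively isomorphic to an ordered union ultrafilter, and hence sparse. -/

import Mathlib

/-- `𝔽`: the collection of finite nonempty subsets of `ℕ`. -/
abbrev FinsetNat := {a : Finset ℕ // a.Nonempty}

/-- `listMul a l` is the product `a * l₀ * l₁ * ⋯` of a nonempty list in a magma. -/
def listMul {S : Type*} [Mul S] : S → List S → S
  | a, [] => a
  | a, b :: l => a * listMul b l

/-- `finsetMul x a` is the product `∏_{i ∈ a} x i`, taken in increasing order of indices
(junk value `x 0` if `a` is empty). -/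
def finsetMul {S : Type*} [Mul S] (x : ℕ → S) (a : Finset ℕ) : S :=
  match (a.sort (· ≤ ·)).map x with
  | [] => x 0
  | b :: l => listMul b l

/-- `FPIn x D` is the set of products `∏_{i ∈ a} x i` (in increasing order of indices), where
`a` ranges over the finite nonempty subsets of `D`. -/
def FPIn {S : Type*} [Semigroup S] (x : ℕ → S) (D : Set ℕ) : Set S :=
  {s | ∃ a : Finset ℕ, a.Nonempty ∧ ↑a ⊆ D ∧ s = finsetMul x a}

/-- `FPfin x` is the set of products `∏_{i ∈ a} x i` (in increasing order of indices), where
`a` ranges over all finite nonempty subsets of `ℕ`. -/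
def FPfin {S : Type*} [Semigroup S] (x : ℕ → S) : Set S :=
  FPIn x Set.univ

/-- An ultrafilter `p` on a semigroup `S` is *strongly productive* if every member of `p`
contains a set of the form `FP x` that itself belongs to `p`. -/
def StronglyProductive {S : Type*} [Semigroup S] (p : Ultrafilter S) : Prop :=
  ∀ A ∈ p, ∃ x : ℕ → S, FPfin x ⊆ A ∧ FPfin x ∈ p

/-- A sequence in `𝔽` is *ordered* if `max (b n) < min (b (n+1))` for all `n`. -/
def OrderedSeq (b : ℕ → FinsetNat) : Prop :=
  ∀ n : ℕ, (b n : Finset ℕ).max' (b n).2 < (b (n + 1) : Finset ℕ).min' (b (n + 1)).2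

/-- `FU b` is the set of unions `⋃_{i ∈ a} b i` with `a` a finite nonempty subset of `ℕ`. -/
def FU (b : ℕ → FinsetNat) : Set FinsetNat :=
  {c | ∃ a : Finset ℕ, a.Nonempty ∧ (c : Finset ℕ) = a.biUnion fun i => (b i : Finset ℕ)}

/-- An ultrafilter `q` on `𝔽` is an *ordered union ultrafilter* if every member of `q` contains
a set of the form `FU b`, with `b` ordered, that itself belongs to `q`. -/
def OrderedUnionUltrafilter (q : Ultrafilter FinsetNat) : Prop :=
  ∀ A ∈ q, ∃ b : ℕ → FinsetNat, OrderedSeq b ∧ FU b ⊆ A ∧ FU b ∈ q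

/-- A strongly productive ultrafilter `p` on `S` is *multiplicatively isomorphic to an ordered
union ultrafilter* if there is a sequence `x` in `S` such that `a ↦ ∏_{i ∈ a} x i` is injective
and `{f⁻¹[A] : A ∈ p}` is an ordered union ultrafilter on `𝔽`. -/
def MultIsoOrderedUnion {S : Type*} [Semigroup S] (p : Ultrafilter S) : Prop :=
  ∃ x : ℕ → S, Function.Injective (fun a : FinsetNat => finsetMul x (a : Finset ℕ)) ∧
    ∃ q : Ultrafilter FinsetNat, OrderedUnionUltrafilter q ∧
      ∀ B : Set FinsetNat,
        B ∈ q ↔ ∃ A ∈ p, B = (fun a : FinsetNat => finsetMul x (a : Finset ℕ)) ⁻¹' A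

/-- A strongly productive ultrafilter `p` on `S` is *sparse* if for every `A ∈ p` there are a
sequence `x` in `S` and an infinite set `D ⊆ ℕ` with infinite complement such that
`FP x ⊆ A` and the set of finite products of the subsequence of `x` indexed by `D` is in `p`. -/
def SparseSP {S : Type*} [Semigroup S] (p : Ultrafilter S) : Prop :=
  ∀ A ∈ p, ∃ (x : ℕ → S) (D : Set ℕ), D.Infinite ∧ D.compl.Infinite ∧
    FPfin x ⊆ A ∧ FPIn x D ∈ p

/-- A sequence `y` in the free semigroup on the generators `s n = FreeSemigroup.of n` is a
*product subsystem* of `(s n)` if there is an ordered sequence `(a n)` in `𝔽` with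
`y n = ∏_{i ∈ a n} s i`. -/
def ProductSubsystem (y : ℕ → FreeSemigroup ℕ) : Prop :=
  ∃ a : ℕ → FinsetNat, OrderedSeq a ∧
    ∀ n : ℕ, y n = finsetMul (fun k => FreeSemigroup.of k) (a n : Finset ℕ)

/-- An ultrafilter `p` on the free semigroup on countably many generators is *very strongly
productive* if every member of `p` contains a set `FP y`, with `y` a product subsystem of the
sequence of generators, that itself belongs to `p`. -/
def VeryStronglyProductive (p : Ultrafilter (FreeSemigroup ℕ)) : Prop :=
  ∀ A ∈ p, ∃ y : ℕ → FreeSemigroup ℕ, ProductSubsystem y ∧ FPfin y ⊆ A ∧ FPfin y ∈ p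

section Aux
open Finset

lemma listMul_cons {S : Type*} [Mul S] (a b : S) (l : List S) :
    listMul a (b :: l) = a * listMul b l := rfl

lemma listMul_append {S : Type*} [Semigroup S] (a c : S) (l m : List S) :
    listMul a (l ++ c :: m) = listMul a l * listMul c m := by
  induction l generalizing a with
  | nil => simp [listMul]
  | cons b l ih => rw [List.cons_append, listMul_cons, listMul_cons, ih, mul_assoc]

/-- separated sequences of finsets -/
def SepSeq (g : ℕ → Finset ℕ) : Prop := ∀ ⦃i j : ℕ⦄, i < j → ∀ m ∈ g i, ∀ n ∈ g j, m < n

lemma sort_union {a b : Finset ℕ} (h : ∀ m ∈ a, ∀ n ∈ b, m < n) :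
    (a ∪ b).sort (· ≤ ·) = a.sort (· ≤ ·) ++ b.sort (· ≤ ·) := by
  apply List.Perm.eq_of_pairwise' (Finset.pairwise_sort _ _) ?_ ?_
  · rw [List.pairwise_append]
    refine ⟨Finset.pairwise_sort _ _, Finset.pairwise_sort _ _, fun x hx y hy => ?_⟩
    exact le_of_lt (h x ((Finset.mem_sort _).1 hx) y ((Finset.mem_sort _).1 hy))
  · rw [← Multiset.coe_eq_coe]
    have hd : Disjoint a b := by
      rw [Finset.disjoint_left]
      intro x hxa hxb
      exact absurd (h x hxa x hxb) (lt_irrefl x)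
    have e1 : ∀ l m : List ℕ, ((l ++ m : List ℕ) : Multiset ℕ) = ↑l + ↑m := fun l m => by simp
    rw [e1, Finset.sort_eq, Finset.sort_eq, Finset.sort_eq, ← Finset.disjUnion_eq_union a b hd]
    rfl

lemma sort_eq_cons {a : Finset ℕ} (ha : a.Nonempty) :
    ∃ h t, a.sort (· ≤ ·) = h :: t := by
  obtain ⟨m, hm⟩ := ha
  have : m ∈ a.sort (· ≤ ·) := (Finset.mem_sort _).2 hm
  cases hs : a.sort (· ≤ ·) with
  | nil => rw [hs] at this; simp at this
  | cons h t => exact ⟨h, t, rfl⟩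

lemma finsetMul_eq {S : Type*} [Mul S] (x : ℕ → S) {a : Finset ℕ} {h : ℕ} {t : List ℕ}
    (hs : a.sort (· ≤ ·) = h :: t) : finsetMul x a = listMul (x h) (t.map x) := by
  unfold finsetMul
  rw [hs]
  rfl

lemma finsetMul_singleton {S : Type*} [Mul S] (x : ℕ → S) (i : ℕ) :
    finsetMul x {i} = x i := by
  rw [finsetMul_eq x (Finset.sort_singleton _ i)]
  rfl

lemma finsetMul_union {S : Type*} [Semigroup S] (x : ℕ → S) {a b : Finset ℕ}
    (ha : a.Nonempty) (hb : b.Nonempty) (h : ∀ m ∈ a, ∀ n ∈ b, m < n) :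
    finsetMul x (a ∪ b) = finsetMul x a * finsetMul x b := by
  obtain ⟨ha', ta, hsa⟩ := sort_eq_cons ha
  obtain ⟨hb', tb, hsb⟩ := sort_eq_cons hb
  have hsu : (a ∪ b).sort (· ≤ ·) = ha' :: (ta ++ hb' :: tb) := by
    rw [sort_union h, hsa, hsb]; rfl
  rw [finsetMul_eq x hsu, finsetMul_eq x hsa, finsetMul_eq x hsb]
  rw [List.map_append, List.map_cons]
  exact listMul_append _ _ _ _

lemma ne_biUnion {g : ℕ → Finset ℕ} (hg : ∀ n, (g n).Nonempty) {e : Finset ℕ}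
    (he : e.Nonempty) : (e.biUnion g).Nonempty := by
  obtain ⟨n, hn⟩ := he
  obtain ⟨m, hm⟩ := hg n
  exact ⟨m, Finset.mem_biUnion.2 ⟨n, hn, hm⟩⟩

lemma finsetMul_biUnion {S : Type*} [Semigroup S] (x : ℕ → S) {g : ℕ → Finset ℕ}
    (hne : ∀ n, (g n).Nonempty) (hsep : SepSeq g) {z : ℕ → S}
    (hz : ∀ n, z n = finsetMul x (g n)) {e : Finset ℕ} (he : e.Nonempty) :
    finsetMul z e = finsetMul x (e.biUnion g) := by
  induction e using Finset.induction_on_min with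
  | empty => simp at he
  | insert a s hlt ih =>
    rcases s.eq_empty_or_nonempty with hs | hs
    · subst hs
      simp only [insert_empty_eq, Finset.singleton_biUnion, finsetMul_singleton]
      exact hz a
    · have hsepidx : ∀ m ∈ ({a} : Finset ℕ), ∀ n ∈ s, m < n := by
        intro m hm n hn
        rw [Finset.mem_singleton] at hm; subst hm; exact hlt n hn
      have h1 : finsetMul z (insert a s) = z a * finsetMul z s := by
        rw [Finset.insert_eq, finsetMul_union z (Finset.singleton_nonempty a) hs hsepidx,
          finsetMul_singleton]
      have hsepel : ∀ m ∈ g a, ∀ n ∈ s.biUnion g, m < n := by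
        intro m hm n hn
        obtain ⟨j, hj, hnj⟩ := Finset.mem_biUnion.1 hn
        exact hsep (hlt j hj) m hm n hnj
      rw [h1, ih hs, hz a, ← finsetMul_union x (hne a) (ne_biUnion hne hs) hsepel,
        Finset.biUnion_insert]

lemma biUnion_subset_of_sep {g : ℕ → Finset ℕ} (hne : ∀ n, (g n).Nonempty) (hsep : SepSeq g)
    {e e' : Finset ℕ} (h : e.biUnion g = e'.biUnion g) : e ⊆ e' := by
  intro i hi
  obtain ⟨m, hm⟩ := hne i
  have : m ∈ e'.biUnion g := by
    rw [← h]; exact Finset.mem_biUnion.2 ⟨i, hi, hm⟩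
  obtain ⟨j, hj, hmj⟩ := Finset.mem_biUnion.1 this
  rcases lt_trichotomy i j with hij | hij | hij
  · exact absurd (hsep hij m hm m hmj) (lt_irrefl m)
  · subst hij; exact hj
  · exact absurd (hsep hij m hmj m hm) (lt_irrefl m)

lemma biUnion_inj {g : ℕ → Finset ℕ} (hne : ∀ n, (g n).Nonempty) (hsep : SepSeq g)
    {e e' : Finset ℕ} (h : e.biUnion g = e'.biUnion g) : e = e' :=
  Finset.Subset.antisymm (biUnion_subset_of_sep hne hsep h)
    (biUnion_subset_of_sep hne hsep h.symm)

lemma sep_of_ordered {b : ℕ → FinsetNat} (h : OrderedSeq b) :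
    SepSeq (fun n => (b n : Finset ℕ)) := by
  have key : ∀ i j : ℕ, i < j →
      (b i : Finset ℕ).max' (b i).2 < (b j : Finset ℕ).min' (b j).2 := by
    intro i j hij
    induction j with
    | zero => omega
    | succ k ih =>
      rcases Nat.lt_or_ge i k with hik | hik
      · exact lt_of_lt_of_le (ih hik) (le_trans (Finset.min'_le _ _ ((b k : Finset ℕ).max'_mem (b k).2)) (le_of_lt (h k)))
      · have : i = k := by omega
        subst this; exact h i
  intro i j hij m hm n hn
  exact lt_of_le_of_lt (Finset.le_max' _ m hm) (lt_of_lt_of_le (key i j hij) (Finset.min'_le _ n hn))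

end Aux
section Aux2

/-- the generators -/
abbrev Sgen : ℕ → FreeSemigroup ℕ := fun k => FreeSemigroup.of k

def toL (w : FreeSemigroup ℕ) : List ℕ := w.1 :: w.2

lemma toL_of_mul (h : ℕ) (w : FreeSemigroup ℕ) : toL (Sgen h * w) = h :: toL w := rfl

lemma toL_listMul (h : ℕ) (t : List ℕ) : toL (listMul (Sgen h) (t.map Sgen)) = h :: t := by
  induction t generalizing h with
  | nil => rfl
  | cons b l ih =>
    rw [List.map_cons, listMul_cons, toL_of_mul, ih]

lemma toL_finsetMul {a : Finset ℕ} (ha : a.Nonempty) :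
    toL (finsetMul Sgen a) = a.sort (· ≤ ·) := by
  obtain ⟨h, t, hs⟩ := sort_eq_cons ha
  rw [finsetMul_eq Sgen hs, toL_listMul, hs]

lemma genMul_inj {a b : Finset ℕ} (ha : a.Nonempty) (hb : b.Nonempty)
    (h : finsetMul Sgen a = finsetMul Sgen b) : a = b := by
  have h2 : a.sort (· ≤ ·) = b.sort (· ≤ ·) := by
    rw [← toL_finsetMul ha, ← toL_finsetMul hb, h]
  ext n
  rw [← Finset.mem_sort (α := ℕ) (· ≤ ·), h2, Finset.mem_sort]

lemma prodY_inj {B : ℕ → Finset ℕ} (hBne : ∀ n, (B n).Nonempty) (hBsep : SepSeq B)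
    {y : ℕ → FreeSemigroup ℕ} (hy : ∀ n, y n = finsetMul Sgen (B n))
    {e e' : Finset ℕ} (he : e.Nonempty) (he' : e'.Nonempty)
    (h : finsetMul y e = finsetMul y e') : e = e' := by
  rw [finsetMul_biUnion Sgen hBne hBsep hy he, finsetMul_biUnion Sgen hBne hBsep hy he'] at h
  exact biUnion_inj hBne hBsep
    (genMul_inj (ne_biUnion hBne he) (ne_biUnion hBne he') h)

/-- decomposition of one product subsystem over another -/
lemma decomp {y z : ℕ → FreeSemigroup ℕ} {B : ℕ → Finset ℕ}
    (hBne : ∀ n, (B n).Nonempty) (hBsep : SepSeq B)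
    (hy : ∀ n, y n = finsetMul Sgen (B n)) (hzsub : ProductSubsystem z)
    (hzFP : ∀ n, z n ∈ FPfin y) :
    ∃ d : ℕ → Finset ℕ, (∀ n, (d n).Nonempty) ∧ SepSeq d ∧
      ∀ n, z n = finsetMul y (d n) := by
  obtain ⟨cc, hcord, hcz⟩ := hzsub
  have hCsep : SepSeq (fun n => (cc n : Finset ℕ)) := sep_of_ordered hcord
  choose d hd1 _hd2 hd3 using hzFP
  have hCd : ∀ n, (cc n : Finset ℕ) = (d n).biUnion B := by
    intro n
    apply genMul_inj (cc n).2 (ne_biUnion hBne (hd1 n))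
    rw [← hcz n, hd3 n, finsetMul_biUnion Sgen hBne hBsep hy (hd1 n)]
  refine ⟨d, hd1, ?_, hd3⟩
  intro i j hij m hm n hn
  have hmemi : ∀ w ∈ B m, w ∈ (cc i : Finset ℕ) := by
    intro w hw; rw [hCd i]; exact Finset.mem_biUnion.2 ⟨m, hm, hw⟩
  have hmemj : ∀ w ∈ B n, w ∈ (cc j : Finset ℕ) := by
    intro w hw; rw [hCd j]; exact Finset.mem_biUnion.2 ⟨n, hn, hw⟩
  obtain ⟨u, hu⟩ := hBne m
  obtain ⟨v, hv⟩ := hBne n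
  have huv : u < v := hCsep hij u (hmemi u hu) v (hmemj v hv)
  rcases lt_trichotomy m n with h1 | h1 | h1
  · exact h1
  · subst h1
    exact absurd (hCsep hij u (hmemi u hu) u (hmemj u hu)) (lt_irrefl u)
  · exact absurd (hBsep h1 v hv u hu) (by omega)

end Aux2
section PartA

/-- the canonical map `𝔽 → S` -/
noncomputable def Fmap : FinsetNat → FreeSemigroup ℕ := fun a => finsetMul Sgen (a : Finset ℕ)

lemma Fmap_inj : Function.Injective Fmap := fun a b h =>
  Subtype.ext (genMul_inj a.2 b.2 h)

lemma mem_FPfin_gen (w : FreeSemigroup ℕ) : w ∈ FPfin Sgen ↔ ∃ a : FinsetNat, Fmap a = w := by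
  constructor
  · rintro ⟨a, ha, -, rfl⟩
    exact ⟨⟨a, ha⟩, rfl⟩
  · rintro ⟨a, rfl⟩
    exact ⟨a.1, a.2, Set.subset_univ _, rfl⟩

open Classical in
noncomputable def gInv : FreeSemigroup ℕ → FinsetNat := fun w =>
  if h : ∃ a : FinsetNat, Fmap a = w then h.choose else ⟨{0}, Finset.singleton_nonempty 0⟩

lemma gInv_Fmap (a : FinsetNat) : gInv (Fmap a) = a := by
  have h : ∃ b : FinsetNat, Fmap b = Fmap a := ⟨a, rfl⟩
  rw [gInv, dif_pos h]
  exact Fmap_inj h.choose_spec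

lemma Fmap_gInv {w : FreeSemigroup ℕ} (hw : w ∈ FPfin Sgen) : Fmap (gInv w) = w := by
  obtain ⟨a, rfl⟩ := (mem_FPfin_gen w).1 hw
  rw [gInv_Fmap]

lemma multIso (p : Ultrafilter (FreeSemigroup ℕ))
    (hvsp : VeryStronglyProductive p) : MultIsoOrderedUnion p := by
  -- FPfin Sgen ∈ p
  have hFP : FPfin Sgen ∈ p := by
    obtain ⟨y, ⟨bb, hbord, hby⟩, -, hyp⟩ := hvsp Set.univ Filter.univ_mem
    refine Filter.mem_of_superset hyp ?_
    rintro w ⟨e, he, -, rfl⟩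
    rw [finsetMul_biUnion Sgen (fun n => (bb n).2) (sep_of_ordered hbord) hby he]
    exact ⟨(e.biUnion fun n => (bb n : Finset ℕ)),
      ne_biUnion (fun n => (bb n).2) he, Set.subset_univ _, rfl⟩
  refine ⟨Sgen, Fmap_inj, Ultrafilter.map gInv p, ?_, ?_⟩
  · -- ordered union ultrafilter
    intro Bq hBq
    rw [Ultrafilter.mem_map] at hBq
    obtain ⟨y, ⟨bb, hbord, hby⟩, hyA, hyp⟩ :=
      hvsp (gInv ⁻¹' Bq ∩ FPfin Sgen) (Filter.inter_mem hBq hFP)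
    have hBne : ∀ n, ((bb n : Finset ℕ)).Nonempty := fun n => (bb n).2
    have hBsep := sep_of_ordered hbord
    refine ⟨bb, hbord, ?_, ?_⟩
    · rintro c ⟨e, he, hce⟩
      have h1 : Fmap c = finsetMul y e := by
        rw [Fmap, hce, ← finsetMul_biUnion Sgen hBne hBsep hby he]
      have h2 : finsetMul y e ∈ gInv ⁻¹' Bq ∩ FPfin Sgen :=
        hyA ⟨e, he, Set.subset_univ _, rfl⟩
      have := h2.1
      rwa [Set.mem_preimage, ← h1, gInv_Fmap] at this
    · rw [Ultrafilter.mem_map]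
      refine Filter.mem_of_superset hyp ?_
      rintro w ⟨e, he, -, rfl⟩
      rw [finsetMul_biUnion Sgen hBne hBsep hby he]
      have : finsetMul Sgen (e.biUnion fun n => (bb n : Finset ℕ)) =
          Fmap ⟨_, ne_biUnion hBne he⟩ := rfl
      rw [Set.mem_preimage, this, gInv_Fmap]
      exact ⟨e, he, rfl⟩
  · -- the iff
    intro Bq
    rw [Ultrafilter.mem_map]
    constructor
    · intro hBq
      refine ⟨gInv ⁻¹' Bq ∩ FPfin Sgen, Filter.inter_mem hBq hFP, ?_⟩
      ext a
      simp only [Set.mem_preimage, Set.mem_inter_iff]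
      constructor
      · intro ha
        refine ⟨?_, (mem_FPfin_gen _).2 ⟨a, rfl⟩⟩
        show gInv (Fmap a) ∈ Bq
        rwa [gInv_Fmap]
      · rintro ⟨h1, -⟩
        have h2 : gInv (Fmap a) ∈ Bq := h1
        rwa [gInv_Fmap] at h2
    · rintro ⟨A, hA, rfl⟩
      refine Filter.mem_of_superset (Filter.inter_mem hA hFP) ?_
      rintro w ⟨hwA, hwFP⟩
      show Fmap (gInv w) ∈ A
      rw [Fmap_gInv hwFP]
      exact hwA

end PartA
section PartB

variable (d : ℕ → Finset ℕ) (j : ℕ → ℕ)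

def Pp : ℕ → Finset ℕ := fun n => (d n).filter (fun m => m < j n)
def Qq : ℕ → Finset ℕ := fun n => (d n).filter (fun m => j n < m)
def gg : ℕ → Finset ℕ := fun m =>
  if m % 3 = 0 then Pp d j (m / 3) else if m % 3 = 1 then {j (m / 3)} else Qq d j (m / 3)

variable {d j}

lemma mem_gg_cases {m a : ℕ} (ha : a ∈ gg d j m) : a ∈ d (m / 3) ∨ a = j (m / 3) := by
  unfold gg at ha
  split_ifs at ha
  · exact Or.inl (Finset.mem_filter.1 ha).1
  · exact Or.inr (Finset.mem_singleton.1 ha)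
  · exact Or.inl (Finset.mem_filter.1 ha).1

lemma gg_lt {m a : ℕ} (h0 : m % 3 = 0) (ha : a ∈ gg d j m) : a < j (m / 3) := by
  unfold gg at ha
  rw [if_pos h0] at ha
  exact (Finset.mem_filter.1 ha).2

lemma gg_eq1 {m a : ℕ} (h1 : m % 3 = 1) (ha : a ∈ gg d j m) : a = j (m / 3) := by
  unfold gg at ha
  rw [if_neg (by omega), if_pos h1] at ha
  exact Finset.mem_singleton.1 ha

lemma gg_gt {m a : ℕ} (h2 : m % 3 = 2) (ha : a ∈ gg d j m) : j (m / 3) < a := by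
  unfold gg at ha
  rw [if_neg (by omega), if_neg (by omega)] at ha
  exact (Finset.mem_filter.1 ha).2

lemma gg_zero {k : ℕ} : gg d j (3 * k) = Pp d j k := by
  unfold gg
  rw [if_pos (by omega), Nat.mul_div_cancel_left k (by norm_num)]

lemma gg_two {k : ℕ} : gg d j (3 * k + 2) = Qq d j k := by
  unfold gg
  rw [if_neg (by omega), if_neg (by omega)]
  congr 1
  omega

variable {u v : ℕ → ℕ}

lemma Pp_ne (hu : ∀ n, u n ∈ d n) (hju : ∀ n, u n ≤ j n) (hjn : ∀ n, j n ∉ d n) (n : ℕ) :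
    (Pp d j n).Nonempty :=
  ⟨u n, Finset.mem_filter.2 ⟨hu n,
    lt_of_le_of_ne (hju n) (fun h => hjn n (by rw [← h]; exact hu n))⟩⟩

lemma Qq_ne (hv : ∀ n, v n ∈ d n) (hjv : ∀ n, j n ≤ v n) (hjn : ∀ n, j n ∉ d n) (n : ℕ) :
    (Qq d j n).Nonempty :=
  ⟨v n, Finset.mem_filter.2 ⟨hv n,
    lt_of_le_of_ne (hjv n) (fun h => hjn n (by rw [h]; exact hv n))⟩⟩

lemma PQ_union (hjn : ∀ n, j n ∉ d n) (n : ℕ) : Pp d j n ∪ Qq d j n = d n := by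
  ext m
  simp only [Finset.mem_union, Finset.mem_filter, Pp, Qq]
  constructor
  · rintro (⟨h, -⟩ | ⟨h, -⟩) <;> exact h
  · intro hm
    rcases lt_trichotomy m (j n) with h | h | h
    · exact Or.inl ⟨hm, h⟩
    · exact absurd (h ▸ hm) (hjn n)
    · exact Or.inr ⟨hm, h⟩

lemma gg_sep (hdsep : SepSeq d) (hu : ∀ n, u n ∈ d n) (hju : ∀ n, u n ≤ j n)
    (hv : ∀ n, v n ∈ d n) (hjv : ∀ n, j n ≤ v n) : SepSeq (gg d j) := by
  intro m m' hmm' a ha b hb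
  rcases Nat.lt_or_ge (m / 3) (m' / 3) with hk | hk
  · -- different triples
    have ha' : ∃ α ∈ d (m / 3), a ≤ α := by
      rcases mem_gg_cases ha with h | h
      · exact ⟨a, h, le_refl a⟩
      · exact ⟨v (m / 3), hv _, h ▸ hjv _⟩
    have hb' : ∃ β ∈ d (m' / 3), β ≤ b := by
      rcases mem_gg_cases hb with h | h
      · exact ⟨b, h, le_refl b⟩
      · exact ⟨u (m' / 3), hu _, h ▸ hju _⟩
    obtain ⟨α, hα, haα⟩ := ha'
    obtain ⟨β, hβ, hβb⟩ := hb'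
    exact lt_of_le_of_lt haα (lt_of_lt_of_le (hdsep hk α hα β hβ) hβb)
  · have hdiv : m / 3 = m' / 3 := Nat.le_antisymm (Nat.div_le_div_right hmm'.le) hk
    have hmod : m % 3 < m' % 3 := by omega
    rcases (by omega : m % 3 = 0 ∨ m % 3 = 1) with h0 | h1
    · have ha' := gg_lt h0 ha
      have hb' : j (m / 3) ≤ b := by
        rcases (by omega : m' % 3 = 1 ∨ m' % 3 = 2) with h | h
        · rw [hdiv]; exact le_of_eq (gg_eq1 h hb).symm
        · rw [hdiv]; exact le_of_lt (gg_gt h hb)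
      omega
    · have ha' := gg_eq1 h1 ha
      have hb' := gg_gt (by omega : m' % 3 = 2) hb
      rw [← hdiv] at hb'
      omega

end PartB
lemma sparse (p : Ultrafilter (FreeSemigroup ℕ))
    (hvsp : VeryStronglyProductive p) : SparseSP p := by
  intro A hA
  obtain ⟨y, ⟨bb, hbord, hby⟩, hyA, hyp⟩ := hvsp A hA
  have hBne : ∀ n, ((bb n : Finset ℕ)).Nonempty := fun n => (bb n).2
  have hBsep := sep_of_ordered hbord
  -- the set of "convex" products of y
  set I : Set (FreeSemigroup ℕ) := {w | ∃ e : Finset ℕ, e.Nonempty ∧ w = finsetMul y e ∧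
    ∀ u ∈ e, ∀ v ∈ e, ∀ k, u ≤ k → k ≤ v → k ∈ e} with hIdef
  have hInotp : I ∉ p := by
    intro hI
    obtain ⟨z, hzsub, hzI, hzp⟩ := hvsp (FPfin y ∩ I) (Filter.inter_mem hyp hI)
    have hzFP : ∀ n, z n ∈ FPfin y ∩ I := fun n =>
      hzI ⟨{n}, Finset.singleton_nonempty n, Set.subset_univ _, (finsetMul_singleton z n).symm⟩
    obtain ⟨d, hd1, hdsep, hd3⟩ := decomp hBne hBsep hby hzsub (fun n => (hzFP n).1)
    have he02 : ({0, 2} : Finset ℕ).Nonempty := ⟨0, by simp⟩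
    have hw : finsetMul z ({0, 2} : Finset ℕ) ∈ FPfin y ∩ I :=
      hzI ⟨{0, 2}, he02, Set.subset_univ _, rfl⟩
    obtain ⟨e', he'ne, he'eq, he'conv⟩ := hw.2
    have hbu : ({0, 2} : Finset ℕ).biUnion d = d 0 ∪ d 2 := by
      rw [show ({0, 2} : Finset ℕ) = insert 0 {2} from rfl, Finset.biUnion_insert,
        Finset.singleton_biUnion]
    have hze : finsetMul z ({0, 2} : Finset ℕ) = finsetMul y (d 0 ∪ d 2) := by
      rw [finsetMul_biUnion y hd1 hdsep hd3 he02, hbu]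
    have hne02 : (d 0 ∪ d 2).Nonempty := Finset.Nonempty.mono Finset.subset_union_left (hd1 0)
    have he'd : e' = d 0 ∪ d 2 :=
      prodY_inj hBne hBsep hby he'ne hne02 (by rw [← he'eq, hze])
    obtain ⟨uu, huu⟩ := hd1 0
    obtain ⟨kk, hkk⟩ := hd1 1
    obtain ⟨vv, hvv⟩ := hd1 2
    have huk : uu < kk := hdsep (by omega) uu huu kk hkk
    have hkv : kk < vv := hdsep (by omega) kk hkk vv hvv
    have hkmem : kk ∈ e' := he'conv uu (by rw [he'd]; exact Finset.mem_union_left _ huu)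
      vv (by rw [he'd]; exact Finset.mem_union_right _ hvv) kk huk.le hkv.le
    rw [he'd] at hkmem
    rcases Finset.mem_union.1 hkmem with h | h
    · exact absurd (hdsep (show 0 < 1 by omega) kk h kk hkk) (lt_irrefl kk)
    · exact absurd (hdsep (show 1 < 2 by omega) kk hkk kk h) (lt_irrefl kk)
  have hIc : Iᶜ ∈ p := Ultrafilter.compl_mem_iff_notMem.2 hInotp
  obtain ⟨z, hzsub, hzI, hzp⟩ := hvsp (FPfin y ∩ Iᶜ) (Filter.inter_mem hyp hIc)
  have hzFP : ∀ n, z n ∈ FPfin y ∩ Iᶜ := fun n =>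
    hzI ⟨{n}, Finset.singleton_nonempty n, Set.subset_univ _, (finsetMul_singleton z n).symm⟩
  obtain ⟨d, hd1, hdsep, hd3⟩ := decomp hBne hBsep hby hzsub (fun n => (hzFP n).1)
  have hnc : ∀ n, ∃ u ∈ d n, ∃ v ∈ d n, ∃ k, u ≤ k ∧ k ≤ v ∧ k ∉ d n := by
    intro n
    by_contra hcon
    push_neg at hcon
    exact (hzFP n).2 ⟨d n, hd1 n, hd3 n, fun u hu v hv k huk hkv => hcon u hu v hv k huk hkv⟩
  choose u hu v hv j hju hjv hjn using hnc
  have hgne : ∀ m, (gg d j m).Nonempty := by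
    intro m
    unfold gg
    split_ifs
    · exact Pp_ne hu hju hjn _
    · exact Finset.singleton_nonempty _
    · exact Qq_ne hv hjv hjn _
  have hgsep : SepSeq (gg d j) := gg_sep hdsep hu hju hv hjv
  refine ⟨fun m => finsetMul y (gg d j m), {m | m % 3 ≠ 1}, ?_, ?_, ?_, ?_⟩
  · exact Set.infinite_of_injective_forall_mem (f := fun k : ℕ => 3 * k)
      (fun a b h => by simp only at h; omega)
      (fun k => by simp only [Set.mem_setOf_eq]; omega)
  · exact Set.infinite_of_injective_forall_mem (f := fun k : ℕ => 3 * k + 1)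
      (fun a b h => by simp only at h; omega)
      (fun k => by show ¬(3 * k + 1) % 3 ≠ 1; omega)
  · rintro w ⟨e, he, -, rfl⟩
    rw [finsetMul_biUnion y hgne hgsep (fun m => rfl) he]
    exact hyA ⟨e.biUnion (gg d j), ne_biUnion hgne he, Set.subset_univ _, rfl⟩
  · refine Filter.mem_of_superset hzp ?_
    rintro w ⟨e, he, -, rfl⟩
    have hpne : ∀ k : ℕ, ({3 * k, 3 * k + 2} : Finset ℕ).Nonempty :=
      fun k => ⟨3 * k, by simp⟩
    have he' : (e.biUnion fun k => ({3 * k, 3 * k + 2} : Finset ℕ)).Nonempty :=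
      ne_biUnion hpne he
    refine ⟨e.biUnion fun k => ({3 * k, 3 * k + 2} : Finset ℕ), he', ?_, ?_⟩
    · intro m hm
      simp only [Finset.coe_biUnion, Set.mem_iUnion, Finset.mem_coe] at hm
      obtain ⟨k, -, hmk⟩ := hm
      rcases Finset.mem_insert.1 hmk with h | h
      · simp only [Set.mem_setOf_eq]; omega
      · rw [Finset.mem_singleton] at h; simp only [Set.mem_setOf_eq]; omega
    · rw [finsetMul_biUnion y hd1 hdsep hd3 he,
        finsetMul_biUnion y hgne hgsep (fun m => rfl) he', Finset.biUnion_biUnion]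
      congr 1
      apply Finset.biUnion_congr rfl
      intro k hk
      rw [show ({3 * k, 3 * k + 2} : Finset ℕ) = insert (3 * k) {3 * k + 2} from rfl,
        Finset.biUnion_insert, Finset.singleton_biUnion, gg_zero, gg_two, PQ_union hjn]

/-- Every very strongly productive ultrafilter on the free semigroup with countably many
generators is multiplicatively isomorphic to an ordered union ultrafilter, and hence sparse. -/
theorem veryStronglyProductive_multIso_and_sparse (p : Ultrafilter (FreeSemigroup ℕ))
    (hvsp : VeryStronglyProductive p) :
    MultIsoOrderedUnion p ∧ SparseSP p := by
  exact ⟨multIso p hvsp, sparse p hvsp⟩
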